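/- For every natural number t ≥ 2 and every integer j, (1/(4π²)) ∫₀^{2π}∫₀^{2π} cos(jφ)·cos(tω)·(1 − cos 2ω) / (1 − 2 cos ω · cos φ + cos²φ) dω dφ = −(1/(4π)) ∫₀^{2π} cos(jφ)·[ (cos φ)^{t−2} − (cos φ)^{t} ] dφ. -/

import Mathlib

open Real MeasureTheory intervalIntegral

noncomputable def den (r ω : ℝ) : ℝ := 1 - 2 * Real.cos ω * r + r ^ 2

lemma one_sub_mul_cos_pos {r : ℝ} (hr : |r| < 1) (ω : ℝ) : 0 < 1 - r * Real.cos ω := by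
  have h1 : |r * Real.cos ω| < 1 := by
    rw [abs_mul]
    calc |r| * |Real.cos ω| ≤ |r| * 1 :=
          mul_le_mul_of_nonneg_left (Real.abs_cos_le_one ω) (abs_nonneg r)
      _ = |r| := mul_one _
      _ < 1 := hr
  have := abs_lt.mp h1
  linarith [this.2]

lemma den_pos {r : ℝ} (hr : |r| < 1) (ω : ℝ) : 0 < den r ω := by
  have h2 := one_sub_mul_cos_pos hr ω
  have hs := Real.sin_sq_add_cos_sq ω
  have key : den r ω = (1 - r * Real.cos ω) ^ 2 + (r * Real.sin ω) ^ 2 := by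
    unfold den; linear_combination (-(r^2)) * hs
  nlinarith [sq_nonneg (r * Real.sin ω), mul_pos h2 h2]

lemma cont_den (r : ℝ) : Continuous (den r) := by unfold den; fun_prop

lemma cont_div_den {r : ℝ} (hr : |r| < 1) {f : ℝ → ℝ} (hf : Continuous f) :
    Continuous fun ω => f ω / den r ω :=
  hf.div (cont_den r) fun ω => (den_pos hr ω).ne'

lemma sq_lt_one' {r : ℝ} (hr : |r| < 1) : r ^ 2 < 1 := by
  have h := abs_lt.mp hr; nlinarith [h.1, h.2]

lemma hasDerivAt_arctanAux {r : ℝ} (hr : |r| < 1) (ω : ℝ) :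
    HasDerivAt (fun x => Real.arctan (r * Real.sin x / (1 - r * Real.cos x)))
      ((Real.cos ω * r - r ^ 2) / den r ω) ω := by
  have h2 := one_sub_mul_cos_pos hr ω
  have hnum : HasDerivAt (fun x => r * Real.sin x) (r * Real.cos ω) ω :=
    (Real.hasDerivAt_sin ω).const_mul r
  have hden : HasDerivAt (fun x => 1 - r * Real.cos x) (r * Real.sin ω) ω := by
    have h := ((Real.hasDerivAt_cos ω).const_mul r)
    have h' := (hasDerivAt_const ω (1:ℝ)).sub h
    simpa using h.const_sub (1:ℝ)
  have hu := hnum.div hden h2.ne'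
  have harc := (Real.hasDerivAt_arctan (r * Real.sin ω / (1 - r * Real.cos ω))).comp ω hu
  refine harc.congr_deriv ?_
  have hD := (den_pos hr ω).ne'
  have hs : Real.sin ω ^ 2 = 1 - Real.cos ω ^ 2 := by
    linear_combination Real.sin_sq_add_cos_sq ω
  have hnum2 : r * Real.cos ω * (1 - r * Real.cos ω) - r * Real.sin ω * (r * Real.sin ω)
      = Real.cos ω * r - r ^ 2 := by linear_combination (-(r^2)) * hs
  have h1 : 1 + (r * Real.sin ω / (1 - r * Real.cos ω)) ^ 2
      = den r ω / (1 - r * Real.cos ω) ^ 2 := by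
    field_simp
    unfold den
    linear_combination (r^2) * hs
  rw [hnum2, h1]
  unfold den at hD ⊢
  have h2' := h2.ne'
  rw [one_div_div, div_mul_div_comm, mul_comm ((1 - r * Real.cos ω) ^ 2),
    mul_div_mul_right _ _ (pow_ne_zero 2 h2')]

lemma int_arctan_deriv {r : ℝ} (hr : |r| < 1) :
    ∫ ω in (0:ℝ)..(2 * π), (Real.cos ω * r - r ^ 2) / den r ω = 0 := by
  have h := intervalIntegral.integral_eq_sub_of_hasDerivAt
    (f := fun x => Real.arctan (r * Real.sin x / (1 - r * Real.cos x)))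
    (fun x _ => hasDerivAt_arctanAux hr x)
    ((cont_div_den hr (by fun_prop : Continuous fun ω => Real.cos ω * r - r ^ 2)).intervalIntegrable 0 (2 * π))
  rw [h]
  simp [Real.sin_two_pi, Real.cos_two_pi]

lemma int_one_div {r : ℝ} (hr : |r| < 1) :
    ∫ ω in (0:ℝ)..(2 * π), 1 / den r ω = 2 * π / (1 - r ^ 2) := by
  have hne : (1:ℝ) - r ^ 2 ≠ 0 := by have := sq_lt_one' hr; linarith
  have hc : Continuous fun ω => (Real.cos ω * r - r ^ 2) / den r ω :=
    cont_div_den hr (by fun_prop)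
  have hpt : ∀ ω ∈ Set.uIcc (0:ℝ) (2 * π), (fun ω => 1 / den r ω) ω
      = (fun ω => (1 / (1 - r ^ 2)) * (1 + 2 * ((Real.cos ω * r - r ^ 2) / den r ω))) ω := by
    intro ω _
    have hD := (den_pos hr ω).ne'
    unfold den at hD ⊢
    field_simp
    ring
  rw [intervalIntegral.integral_congr hpt, intervalIntegral.integral_const_mul,
    intervalIntegral.integral_add (intervalIntegrable_const)
      ((hc.intervalIntegrable 0 (2 * π)).const_mul 2),
    intervalIntegral.integral_const_mul, int_arctan_deriv hr]
  simp
  field_simp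

lemma int_cos_nat (n : ℕ) (hn : n ≠ 0) :
    ∫ ω in (0:ℝ)..(2 * π), Real.cos (n * ω) = 0 := by
  have hd : ∀ x ∈ Set.uIcc (0:ℝ) (2 * π),
      HasDerivAt (fun x => Real.sin ((n:ℝ) * x) / n) (Real.cos ((n:ℝ) * x)) x := by
    intro x _
    have h1 : HasDerivAt (fun x : ℝ => (n:ℝ) * x) (n:ℝ) x := by
      simpa using (hasDerivAt_id x).const_mul (n:ℝ)
    have h2 := (Real.hasDerivAt_sin ((n:ℝ) * x)).comp x h1
    have h3 := h2.div_const (n:ℝ)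
    have hn' : (n:ℝ) ≠ 0 := Nat.cast_ne_zero.mpr hn
    refine h3.congr_deriv ?_
    field_simp
  rw [intervalIntegral.integral_eq_sub_of_hasDerivAt hd
    ((by fun_prop : Continuous fun x => Real.cos ((n:ℝ) * x)).intervalIntegrable 0 (2 * π))]
  have h5 : Real.sin ((n:ℝ) * (2 * π)) = 0 := by
    rw [show (n:ℝ) * (2 * π) = ((2 * n : ℕ) : ℝ) * π by push_cast; ring]
    exact Real.sin_nat_mul_pi (2 * n)
  simp [h5]

noncomputable def J (r : ℝ) (n : ℕ) : ℝ := ∫ ω in (0:ℝ)..(2 * π), Real.cos (n * ω) / den r ω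

lemma J_integrable {r : ℝ} (hr : |r| < 1) (n : ℕ) :
    IntervalIntegrable (fun ω => Real.cos ((n:ℝ) * ω) / den r ω) volume 0 (2 * π) :=
  (cont_div_den hr (by fun_prop)).intervalIntegrable 0 (2 * π)

lemma J_zero {r : ℝ} (hr : |r| < 1) : J r 0 = 2 * π / (1 - r ^ 2) := by
  unfold J
  simp only [Nat.cast_zero, zero_mul, Real.cos_zero]
  exact int_one_div hr

lemma J_one {r : ℝ} (hr : |r| < 1) (hr0 : r ≠ 0) : J r 1 = 2 * π * r / (1 - r ^ 2) := by
  have hne : (1:ℝ) - r ^ 2 ≠ 0 := by have := sq_lt_one' hr; linarith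
  unfold J
  have hpt : ∀ ω ∈ Set.uIcc (0:ℝ) (2 * π),
      (fun ω => Real.cos ((1:ℕ) * ω) / den r ω) ω
      = (fun ω => ((1 + r ^ 2) / (2 * r)) * (1 / den r ω) - 1 / (2 * r)) ω := by
    intro ω _
    have hD := (den_pos hr ω).ne'
    simp only [Nat.cast_one, one_mul]
    unfold den at hD ⊢
    rw [div_eq_iff hD, sub_mul, mul_assoc, one_div_mul_cancel hD, mul_one]
    field_simp
    ring
  rw [intervalIntegral.integral_congr hpt,
    intervalIntegral.integral_sub
      (((cont_div_den hr (f := fun _ => (1:ℝ)) continuous_const).intervalIntegrable 0 (2 * π)).const_mul ((1 + r ^ 2) / (2 * r)))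
      intervalIntegrable_const,
    intervalIntegral.integral_const_mul, int_one_div hr]
  simp only [intervalIntegral.integral_const, smul_eq_mul, sub_zero]
  field_simp
  ring

lemma J_formula {r : ℝ} (hr : |r| < 1) (n : ℕ) : J r n = 2 * π * r ^ n / (1 - r ^ 2) := by
  have hne : (1:ℝ) - r ^ 2 ≠ 0 := by have := sq_lt_one' hr; linarith
  by_cases hr0 : r = 0
  · subst hr0
    unfold J den
    simp only [Real.cos_zero, mul_zero, zero_mul, mul_one]
    cases n with
    | zero => simp
    | succ k =>
      have h := int_cos_nat (k + 1) (Nat.succ_ne_zero k)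
      push_cast at h
      norm_num [h]
  · have key : ∀ m, J r m = 2 * π * r ^ m / (1 - r ^ 2)
        ∧ J r (m + 1) = 2 * π * r ^ (m + 1) / (1 - r ^ 2) := by
      intro m
      induction m with
      | zero =>
        refine ⟨by simpa using J_zero hr, ?_⟩
        simpa using J_one hr hr0
      | succ k ih =>
        refine ⟨ih.2, ?_⟩
        have hpt : ∀ ω ∈ Set.uIcc (0:ℝ) (2 * π),
            (fun ω => Real.cos (((k + 2 : ℕ) : ℝ) * ω) / den r ω) ω
            = (fun ω => ((1 + r ^ 2) / r) * (Real.cos (((k + 1 : ℕ) : ℝ) * ω) / den r ω)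
                - (1 / r) * Real.cos (((k + 1 : ℕ) : ℝ) * ω)
                - Real.cos (((k : ℕ) : ℝ) * ω) / den r ω) ω := by
          intro ω _
          have hD := (den_pos hr ω).ne'
          have trig : Real.cos (((k + 2 : ℕ) : ℝ) * ω)
              = 2 * Real.cos ω * Real.cos (((k + 1 : ℕ) : ℝ) * ω) - Real.cos (((k : ℕ) : ℝ) * ω) := by
            have h1 : ((k + 2 : ℕ) : ℝ) * ω = ((k + 1 : ℕ) : ℝ) * ω + ω := by push_cast; ring
            have h2 : ((k : ℕ) : ℝ) * ω = ((k + 1 : ℕ) : ℝ) * ω - ω := by push_cast; ring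
            rw [h1, h2, Real.cos_add, Real.cos_sub]; ring
          simp only
          rw [trig]
          unfold den at hD ⊢
          field_simp
          ring
        have e1 : J r (k + 2) = ((1 + r ^ 2) / r) * J r (k + 1)
            - (1 / r) * (∫ ω in (0:ℝ)..(2 * π), Real.cos (((k + 1 : ℕ) : ℝ) * ω))
            - J r k := by
          unfold J
          rw [intervalIntegral.integral_congr hpt,
            intervalIntegral.integral_sub
              (((J_integrable hr (k + 1)).const_mul ((1 + r ^ 2) / r)).sub
                (((by fun_prop : Continuous fun ω => Real.cos (((k + 1 : ℕ) : ℝ) * ω)).intervalIntegrable 0 (2 * π)).const_mul (1 / r)))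
              (J_integrable hr k),
            intervalIntegral.integral_sub
              ((J_integrable hr (k + 1)).const_mul ((1 + r ^ 2) / r))
              (((by fun_prop : Continuous fun ω => Real.cos (((k + 1 : ℕ) : ℝ) * ω)).intervalIntegrable 0 (2 * π)).const_mul (1 / r)),
            intervalIntegral.integral_const_mul, intervalIntegral.integral_const_mul]
        rw [e1, int_cos_nat (k + 1) (Nat.succ_ne_zero k), ih.1, ih.2]
        field_simp
        ring
    exact (key n).1

lemma inner_int {r : ℝ} (hr : |r| < 1) (s : ℕ) :
    ∫ ω in (0:ℝ)..(2 * π),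
      Real.cos (((s + 2 : ℕ) : ℝ) * ω) * (1 - Real.cos (2 * ω)) / den r ω
      = -π * (r ^ s - r ^ (s + 2)) := by
  have hne : (1:ℝ) - r ^ 2 ≠ 0 := by have := sq_lt_one' hr; linarith
  have hpt : ∀ ω ∈ Set.uIcc (0:ℝ) (2 * π),
      (fun ω => Real.cos (((s + 2 : ℕ) : ℝ) * ω) * (1 - Real.cos (2 * ω)) / den r ω) ω
      = (fun ω => Real.cos (((s + 2 : ℕ) : ℝ) * ω) / den r ω
          - (1 / 2) * (Real.cos (((s + 4 : ℕ) : ℝ) * ω) / den r ω)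
          - (1 / 2) * (Real.cos (((s : ℕ) : ℝ) * ω) / den r ω)) ω := by
    intro ω _
    have trig : Real.cos (((s + 2 : ℕ) : ℝ) * ω) * Real.cos (2 * ω)
        = (1 / 2) * (Real.cos (((s + 4 : ℕ) : ℝ) * ω) + Real.cos (((s : ℕ) : ℝ) * ω)) := by
      have h1 : ((s + 4 : ℕ) : ℝ) * ω = ((s + 2 : ℕ) : ℝ) * ω + 2 * ω := by push_cast; ring
      have h2 : ((s : ℕ) : ℝ) * ω = ((s + 2 : ℕ) : ℝ) * ω - 2 * ω := by push_cast; ring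
      rw [h1, h2, Real.cos_add, Real.cos_sub]; ring
    have num : Real.cos (((s + 2 : ℕ) : ℝ) * ω) * (1 - Real.cos (2 * ω))
        = Real.cos (((s + 2 : ℕ) : ℝ) * ω) - (1 / 2) * Real.cos (((s + 4 : ℕ) : ℝ) * ω)
          - (1 / 2) * Real.cos (((s : ℕ) : ℝ) * ω) := by
      linear_combination -trig
    simp only
    rw [num]
    ring
  have e1 : (∫ ω in (0:ℝ)..(2 * π),
      Real.cos (((s + 2 : ℕ) : ℝ) * ω) * (1 - Real.cos (2 * ω)) / den r ω)
      = J r (s + 2) - (1 / 2) * J r (s + 4) - (1 / 2) * J r s := by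
    unfold J
    rw [intervalIntegral.integral_congr hpt,
      intervalIntegral.integral_sub
        ((J_integrable hr (s + 2)).sub
          ((J_integrable hr (s + 4)).const_mul (1 / 2)))
        ((J_integrable hr s).const_mul (1 / 2)),
      intervalIntegral.integral_sub (J_integrable hr (s + 2))
        ((J_integrable hr (s + 4)).const_mul (1 / 2)),
      intervalIntegral.integral_const_mul, intervalIntegral.integral_const_mul]
  rw [e1, J_formula hr, J_formula hr, J_formula hr]
  field_simp
  ring

theorem stmt_4 (t : ℕ) (ht : 2 ≤ t) (j : ℤ) :
    (1 / (4 * π ^ 2)) * ∫ φ in (0:ℝ)..(2 * π), ∫ ω in (0:ℝ)..(2 * π),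
        Real.cos (j * φ) * Real.cos (t * ω) * (1 - Real.cos (2 * ω)) /
          (1 - 2 * Real.cos ω * Real.cos φ + (Real.cos φ) ^ 2)
    = -(1 / (4 * π)) * ∫ φ in (0:ℝ)..(2 * π),
        Real.cos (j * φ) * ((Real.cos φ) ^ (t - 2) - (Real.cos φ) ^ t) := by
  obtain ⟨s, rfl⟩ : ∃ s, t = s + 2 := ⟨t - 2, by omega⟩
  have hts : s + 2 - 2 = s := by omega
  rw [hts]
  have hsin : ∀ᵐ x ∂(volume : Measure ℝ), Real.sin x ≠ 0 := by
    have hz : (volume : Measure ℝ) {x : ℝ | Real.sin x = 0} = 0 := by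
      have hsub : {x : ℝ | Real.sin x = 0} ⊆ Set.range (fun n : ℤ => (n : ℝ) * π) := by
        intro x hx
        rcases Real.sin_eq_zero_iff.mp hx with ⟨n, hn⟩
        exact ⟨n, hn⟩
      exact measure_mono_null hsub ((Set.countable_range _).measure_zero _)
    have := (MeasureTheory.measure_eq_zero_iff_ae_notMem (μ := (volume : Measure ℝ))).mp hz
    filter_upwards [this] with x hx
    simpa using hx
  have hae : ∀ᵐ φ ∂(volume : Measure ℝ), φ ∈ Set.uIoc (0:ℝ) (2 * π) →
      (∫ ω in (0:ℝ)..(2 * π),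
        Real.cos (j * φ) * Real.cos (((s + 2 : ℕ) : ℝ) * ω) * (1 - Real.cos (2 * ω)) /
          (1 - 2 * Real.cos ω * Real.cos φ + (Real.cos φ) ^ 2))
      = (-π) * (Real.cos (j * φ) * ((Real.cos φ) ^ s - (Real.cos φ) ^ (s + 2))) := by
    filter_upwards [hsin] with φ hφ _
    have hr : |Real.cos φ| < 1 := by
      have h1 := Real.sin_sq_add_cos_sq φ
      have h2 : 0 < Real.sin φ ^ 2 := by positivity
      rw [abs_lt]
      constructor <;> nlinarith
    calc (∫ ω in (0:ℝ)..(2 * π),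
        Real.cos (j * φ) * Real.cos (((s + 2 : ℕ) : ℝ) * ω) * (1 - Real.cos (2 * ω)) /
          (1 - 2 * Real.cos ω * Real.cos φ + (Real.cos φ) ^ 2))
        = Real.cos (j * φ) * ∫ ω in (0:ℝ)..(2 * π),
            Real.cos (((s + 2 : ℕ) : ℝ) * ω) * (1 - Real.cos (2 * ω)) / den (Real.cos φ) ω := by
          rw [← intervalIntegral.integral_const_mul]
          apply intervalIntegral.integral_congr
          intro ω _
          unfold den
          ring
      _ = (-π) * (Real.cos (j * φ) * ((Real.cos φ) ^ s - (Real.cos φ) ^ (s + 2))) := by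
          rw [inner_int hr s]; ring
  rw [intervalIntegral.integral_congr_ae hae, intervalIntegral.integral_const_mul]
  have hπ : (π : ℝ) ≠ 0 := Real.pi_ne_zero
  field_simp
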